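/- For every F ∈ (0, ∞)^I one has ∑_{k=1}^{I} Q_k[F]·(−1/F_k) ≤ 0, and equality holds if and only if 1/F_{k₂+k₃} = 1/F_{k₂} + 1/F_{k₃} for all k₂, k₃ ∈ {1,…,I} with k₂ + k₃ ≤ I. In particular, the function L(F) = −∑_{k=1}^{I} log F_k is nonincreasing along every positive solution of the discrete exact-resonance acoustic kinetic system. -/

import Mathlib

open scoped BigOperators Classical

/-- Right-hand side of the discrete exact-resonance acoustic kinetic system on one ray:
for `k₁ ∈ {1,…,I}` and kernel `V_{k₁,k₂,k₃} = μ k₁ k₂ k₃`,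
`Q_{k₁}[F] = ∑_{k₂+k₃=k₁} V (F_{k₂}F_{k₃} − F_{k₁}(F_{k₂}+F_{k₃}))
  − 2 ∑_{k₁+k₂=k₃} V (F_{k₁}F_{k₂} − F_{k₃}(F_{k₁}+F_{k₂}))`. -/
noncomputable def Qd (I : ℕ) (μ : ℝ) (F : ℕ → ℝ) (k1 : ℕ) : ℝ :=
  (∑ k2 ∈ Finset.Icc 1 I, ∑ k3 ∈ Finset.Icc 1 I,
      if k2 + k3 = k1 then μ * k1 * k2 * k3 * (F k2 * F k3 - F k1 * (F k2 + F k3)) else 0)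
  - 2 * ∑ k2 ∈ Finset.Icc 1 I, ∑ k3 ∈ Finset.Icc 1 I,
      if k1 + k2 = k3 then μ * k3 * k1 * k2 * (F k1 * F k2 - F k3 * (F k1 + F k2)) else 0

/-- The dissipation `∑_k Q_k[F]·(−1/F_k)` equals a sum of manifestly nonpositive terms. -/
lemma Qd_dissipation_eq (I : ℕ) (μ : ℝ) (F : ℕ → ℝ)
    (hF : ∀ k ∈ Finset.Icc 1 I, F k ≠ 0) :
    ∑ k ∈ Finset.Icc 1 I, Qd I μ F k * (-(1 / F k)) =
    ∑ a ∈ Finset.Icc 1 I, ∑ b ∈ Finset.Icc 1 I,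
      (if a + b ∈ Finset.Icc 1 I then
        -(μ * (a + b : ℕ) * a * b * (F a * F b * F (a + b)) *
          (1 / F a + 1 / F b - 1 / F (a + b)) ^ 2) else 0) := by
  set s := Finset.Icc 1 I with hs
  have step : ∀ k1 ∈ s, Qd I μ F k1 * (-(1 / F k1)) =
      (∑ k2 ∈ s, ∑ k3 ∈ s, if k2 + k3 = k1 then
          -(μ * k1 * k2 * k3 * (F k2 * F k3 - F k1 * (F k2 + F k3)) * (1 / F k1)) else 0)
      + 2 * ∑ k2 ∈ s, ∑ k3 ∈ s, if k1 + k2 = k3 then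
          μ * k3 * k1 * k2 * (F k1 * F k2 - F k3 * (F k1 + F k2)) * (1 / F k1) else 0 := by
    intro k1 _
    have h1 : (∑ k2 ∈ s, ∑ k3 ∈ s, if k2 + k3 = k1 then
          μ * k1 * k2 * k3 * (F k2 * F k3 - F k1 * (F k2 + F k3)) else 0) * (-(1 / F k1))
        = ∑ k2 ∈ s, ∑ k3 ∈ s, if k2 + k3 = k1 then
          -(μ * k1 * k2 * k3 * (F k2 * F k3 - F k1 * (F k2 + F k3)) * (1 / F k1)) else 0 := by
      rw [Finset.sum_mul]
      refine Finset.sum_congr rfl fun k2 _ => ?_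
      rw [Finset.sum_mul]
      refine Finset.sum_congr rfl fun k3 _ => ?_
      split_ifs <;> ring
    have h2 : (∑ k2 ∈ s, ∑ k3 ∈ s, if k1 + k2 = k3 then
          μ * k3 * k1 * k2 * (F k1 * F k2 - F k3 * (F k1 + F k2)) else 0) * (1 / F k1)
        = ∑ k2 ∈ s, ∑ k3 ∈ s, if k1 + k2 = k3 then
          μ * k3 * k1 * k2 * (F k1 * F k2 - F k3 * (F k1 + F k2)) * (1 / F k1) else 0 := by
      rw [Finset.sum_mul]
      refine Finset.sum_congr rfl fun k2 _ => ?_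
      rw [Finset.sum_mul]
      refine Finset.sum_congr rfl fun k3 _ => ?_
      split_ifs <;> ring
    rw [Qd]
    linear_combination h1 + 2 * h2
  rw [Finset.sum_congr rfl step, Finset.sum_add_distrib, ← Finset.mul_sum]
  have c1 : (∑ k1 ∈ s, ∑ k2 ∈ s, ∑ k3 ∈ s, if k2 + k3 = k1 then
        -(μ * k1 * k2 * k3 * (F k2 * F k3 - F k1 * (F k2 + F k3)) * (1 / F k1)) else 0)
      = ∑ a ∈ s, ∑ b ∈ s, if a + b ∈ s then
        -(μ * (a + b : ℕ) * a * b * (F a * F b - F (a + b) * (F a + F b)) * (1 / F (a + b))) else 0 := by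
    rw [Finset.sum_comm]
    refine Finset.sum_congr rfl fun a _ => ?_
    rw [Finset.sum_comm]
    refine Finset.sum_congr rfl fun b _ => ?_
    exact Finset.sum_ite_eq s (a + b)
      (fun k1 => -(μ * k1 * a * b * (F a * F b - F k1 * (F a + F b)) * (1 / F k1)))
  have c2 : (∑ k1 ∈ s, ∑ k2 ∈ s, ∑ k3 ∈ s, if k1 + k2 = k3 then
        μ * k3 * k1 * k2 * (F k1 * F k2 - F k3 * (F k1 + F k2)) * (1 / F k1) else 0)
      = ∑ a ∈ s, ∑ b ∈ s, if a + b ∈ s then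
        μ * (a + b : ℕ) * a * b * (F a * F b - F (a + b) * (F a + F b)) * (1 / F a) else 0 := by
    refine Finset.sum_congr rfl fun a _ => Finset.sum_congr rfl fun b _ => ?_
    exact Finset.sum_ite_eq s (a + b)
      (fun k3 => μ * k3 * a * b * (F a * F b - F k3 * (F a + F b)) * (1 / F a))
  rw [c1, c2]
  have c3 : (∑ a ∈ s, ∑ b ∈ s, if a + b ∈ s then
        μ * (a + b : ℕ) * a * b * (F a * F b - F (a + b) * (F a + F b)) * (1 / F a) else 0)
      = ∑ a ∈ s, ∑ b ∈ s, if a + b ∈ s then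
        μ * (a + b : ℕ) * a * b * (F a * F b - F (a + b) * (F a + F b)) * (1 / F b) else 0 := by
    rw [Finset.sum_comm]
    refine Finset.sum_congr rfl fun a _ => Finset.sum_congr rfl fun b _ => ?_
    rw [Nat.add_comm b a]
    split_ifs with h
    · ring
    · rfl
  have twosplit : (2 : ℝ) * (∑ a ∈ s, ∑ b ∈ s, if a + b ∈ s then
        μ * (a + b : ℕ) * a * b * (F a * F b - F (a + b) * (F a + F b)) * (1 / F a) else 0)
      = (∑ a ∈ s, ∑ b ∈ s, if a + b ∈ s then
        μ * (a + b : ℕ) * a * b * (F a * F b - F (a + b) * (F a + F b)) * (1 / F a) else 0)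
      + (∑ a ∈ s, ∑ b ∈ s, if a + b ∈ s then
        μ * (a + b : ℕ) * a * b * (F a * F b - F (a + b) * (F a + F b)) * (1 / F b) else 0) := by
    rw [← c3]; ring
  rw [twosplit, ← Finset.sum_add_distrib, ← Finset.sum_add_distrib]
  refine Finset.sum_congr rfl fun a ha => ?_
  rw [← Finset.sum_add_distrib, ← Finset.sum_add_distrib]
  refine Finset.sum_congr rfl fun b hb => ?_
  split_ifs with h
  · have ha' := hF a ha
    have hb' := hF b hb
    have hc' := hF _ h
    field_simp
    ring
  · simp

/-- Lyapunov dissipation for the discrete exact-resonance acoustic kinetic system: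
`∑_k Q_k[F]·(−1/F_k) ≤ 0` on the positive orthant, with equality iff
`1/F_{k₂+k₃} = 1/F_{k₂} + 1/F_{k₃}` whenever `k₂ + k₃ ≤ I`; in particular
`L(F) = −∑_k log F_k` is nonincreasing along every positive solution. -/
theorem lyapunov_dissipation_exact_resonance (I : ℕ) (hI : 0 < I) (μ : ℝ) (hμ : 0 < μ)
    (F : ℕ → ℝ) (hF : ∀ k ∈ Finset.Icc 1 I, 0 < F k) :
    (∑ k ∈ Finset.Icc 1 I, Qd I μ F k * (-(1 / F k)) ≤ 0) ∧
    ((∑ k ∈ Finset.Icc 1 I, Qd I μ F k * (-(1 / F k)) = 0) ↔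
      ∀ k2 ∈ Finset.Icc 1 I, ∀ k3 ∈ Finset.Icc 1 I, k2 + k3 ≤ I →
        1 / F (k2 + k3) = 1 / F k2 + 1 / F k3) ∧
    (∀ G : ℝ → ℕ → ℝ,
      (∀ k ∈ Finset.Icc 1 I, ∀ t : ℝ, 0 ≤ t →
        HasDerivAt (fun s => G s k) (Qd I μ (G t) k) t) →
      (∀ k ∈ Finset.Icc 1 I, ∀ t : ℝ, 0 ≤ t → 0 < G t k) →
      ∀ s t : ℝ, 0 ≤ s → s ≤ t →
        -∑ k ∈ Finset.Icc 1 I, Real.log (G t k) ≤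
          -∑ k ∈ Finset.Icc 1 I, Real.log (G s k)) := by
  classical
  -- Part 1 as a statement about an arbitrary positive `F` (needed again in part 3).
  have diss : ∀ F : ℕ → ℝ, (∀ k ∈ Finset.Icc 1 I, 0 < F k) →
      ∑ k ∈ Finset.Icc 1 I, Qd I μ F k * (-(1 / F k)) ≤ 0 := by
    intro F hF
    rw [Qd_dissipation_eq I μ F (fun k hk => ne_of_gt (hF k hk))]
    refine Finset.sum_nonpos fun a ha => Finset.sum_nonpos fun b hb => ?_
    split_ifs with h
    · have h1 : (0:ℝ) < a := by
        have := (Finset.mem_Icc.mp ha).1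
        exact_mod_cast Nat.lt_of_lt_of_le Nat.zero_lt_one this
      have h2 : (0:ℝ) < b := by
        have := (Finset.mem_Icc.mp hb).1
        exact_mod_cast Nat.lt_of_lt_of_le Nat.zero_lt_one this
      have h3 : (0:ℝ) < ((a + b : ℕ) : ℝ) := by push_cast; linarith
      have h4 := hF a ha
      have h5 := hF b hb
      have h6 := hF _ h
      have hC : (0:ℝ) ≤ μ * (a + b : ℕ) * a * b * (F a * F b * F (a + b)) := by positivity
      have := mul_nonneg hC (sq_nonneg (1 / F a + 1 / F b - 1 / F (a + b)))
      linarith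
    · exact le_refl 0
  refine ⟨diss F hF, ?_, ?_⟩
  · -- equality characterization
    set s := Finset.Icc 1 I with hs
    have hC : ∀ a ∈ s, ∀ b ∈ s, a + b ∈ s →
        0 < μ * (a + b : ℕ) * a * b * (F a * F b * F (a + b)) := by
      intro a ha b hb hab
      have h1 : (0:ℝ) < a := by
        have := (Finset.mem_Icc.mp ha).1
        exact_mod_cast Nat.lt_of_lt_of_le Nat.zero_lt_one this
      have h2 : (0:ℝ) < b := by
        have := (Finset.mem_Icc.mp hb).1
        exact_mod_cast Nat.lt_of_lt_of_le Nat.zero_lt_one this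
      have h3 : (0:ℝ) < ((a + b : ℕ) : ℝ) := by push_cast; linarith
      have h4 := hF a ha
      have h5 := hF b hb
      have h6 := hF _ hab
      positivity
    have hterm : ∀ a ∈ s, ∀ b ∈ s,
        (if a + b ∈ s then -(μ * (a + b : ℕ) * a * b * (F a * F b * F (a + b)) *
          (1 / F a + 1 / F b - 1 / F (a + b)) ^ 2) else 0) ≤ 0 := by
      intro a ha b hb
      split_ifs with h
      · have := mul_nonneg (hC a ha b hb h).le
          (sq_nonneg (1 / F a + 1 / F b - 1 / F (a + b)))
        linarith
      · exact le_refl 0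
    have hmem : ∀ a ∈ s, ∀ b ∈ s, (a + b ∈ s ↔ a + b ≤ I) := by
      intro a ha b hb
      have := (Finset.mem_Icc.mp ha).1
      rw [hs, Finset.mem_Icc]
      omega
    rw [Qd_dissipation_eq I μ F (fun k hk => ne_of_gt (hF k hk))]
    rw [Finset.sum_eq_zero_iff_of_nonpos
      (fun a ha => Finset.sum_nonpos fun b hb => hterm a ha b hb)]
    constructor
    · intro h0 k2 hk2 k3 hk3 hle
      have h1 := (Finset.sum_eq_zero_iff_of_nonpos (fun b hb => hterm k2 hk2 b hb)).mp
        (h0 k2 hk2) k3 hk3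
      have hmemc : k2 + k3 ∈ s := (hmem k2 hk2 k3 hk3).mpr hle
      rw [if_pos hmemc] at h1
      have hCpos := hC k2 hk2 k3 hk3 hmemc
      have hsq : (1 / F k2 + 1 / F k3 - 1 / F (k2 + k3)) ^ 2 = 0 := by
        by_contra hne
        have : 0 < (1 / F k2 + 1 / F k3 - 1 / F (k2 + k3)) ^ 2 :=
          lt_of_le_of_ne (sq_nonneg _) (Ne.symm hne)
        nlinarith
      have := pow_eq_zero_iff (n := 2) (by norm_num) |>.mp hsq
      linarith [this]
    · intro hcond a ha
      apply Finset.sum_eq_zero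
      intro b hb
      split_ifs with h
      · have hle := (hmem a ha b hb).mp h
        have heq := hcond a ha b hb hle
        have h0 : (1 / F a + 1 / F b - 1 / F (a + b)) = 0 := by rw [heq]; ring
        rw [h0]
        ring
      · rfl
  · -- monotonicity of the Lyapunov functional along solutions
    intro G hG hGpos sVar tVar hsVar hst
    set φ : ℝ → ℝ := fun u => -∑ k ∈ Finset.Icc 1 I, Real.log (G u k) with hφ
    have hderiv : ∀ x : ℝ, 0 ≤ x →
        HasDerivAt φ (∑ k ∈ Finset.Icc 1 I, Qd I μ (G x) k * (-(1 / G x k))) x := by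
      intro x hx
      have h1 : HasDerivAt (fun u => ∑ k ∈ Finset.Icc 1 I, Real.log (G u k))
          (∑ k ∈ Finset.Icc 1 I, Qd I μ (G x) k / G x k) x := by
        apply HasDerivAt.fun_sum
        intro k hk
        exact (hG k hk x hx).log (ne_of_gt (hGpos k hk x hx))
      have h2 := h1.neg
      have h3 : -∑ k ∈ Finset.Icc 1 I, Qd I μ (G x) k / G x k
          = ∑ k ∈ Finset.Icc 1 I, Qd I μ (G x) k * (-(1 / G x k)) := by
        rw [← Finset.sum_neg_distrib]
        exact Finset.sum_congr rfl fun k _ => by ring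
      rw [h3] at h2
      exact h2
    have hanti : AntitoneOn φ (Set.Ici (0:ℝ)) := by
      apply antitoneOn_of_deriv_nonpos (convex_Ici 0)
      · intro x hx
        exact (hderiv x hx).continuousAt.continuousWithinAt
      · intro x hx
        rw [interior_Ici] at hx
        exact (hderiv x (le_of_lt hx)).differentiableAt.differentiableWithinAt
      · intro x hx
        rw [interior_Ici] at hx
        rw [(hderiv x (le_of_lt hx)).deriv]
        exact diss (G x) (fun k hk => hGpos k hk x (le_of_lt hx))
    exact hanti (Set.mem_Ici.mpr hsVar) (Set.mem_Ici.mpr (hsVar.trans hst)) hst
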